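/- For the bitwise cross network with output f_l(x) = 1^T x^l, where x^i = x ⊙ (W^{(i-1)} x^{i-1}) + x^{i-1} and x^1 = x, the coefficient of the monomial x_1^{α_1}···x_d^{α_d} with |α| = p ≥ 2 in f_l(x) equals Σ_{j ∈ C_l^{p-1}} Σ_{i ∈ P_α} ∏_{k=1}^{p-1} w^{(j_k)}_{i_k, i_{k+1}}, where P_α is the set of all permutations of the multiset containing index t with multiplicity α_t, and C_l^{p-1} is the set of strictly decreasing (p-1)-tuples in {1,...,l}; the coefficient of each degree-1 monomial x_t is 1, and monomials of degree > l+1 have coefficient 0. -/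

import Mathlib

open MvPolynomial
open scoped Classical

noncomputable section BitwiseAux

/-- product of weights along a decreasing list of layer indices -/
noncomputable def term {d : ℕ} (W : ℕ → Matrix (Fin d) (Fin d) ℝ) :
    List ℕ → Fin d → MvPolynomial (Fin d) ℝ
  | [], j => X j
  | a :: as, j => X j * ∑ k, C (W a j k) * term W as k

def cnt {d n : ℕ} (I : Fin n → Fin d) (t : Fin d) : ℕ :=
  (Finset.univ.filter fun k => I k = t).card

lemma cnt_cons {d n : ℕ} (j : Fin d) (I : Fin n → Fin d) (t : Fin d) :
    cnt (Fin.cons j I) t = (if j = t then 1 else 0) + cnt I t := by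
  classical
  unfold cnt
  rw [Finset.card_filter, Finset.card_filter, Fin.sum_univ_succ]
  simp [Fin.cons]
  rw [Finset.card_filter]
  convert rfl <;> split_ifs <;> simp_all

lemma cnt_fin_one {d : ℕ} (I : Fin 1 → Fin d) (t : Fin d) :
    cnt I t = if I 0 = t then 1 else 0 := by
  unfold cnt; rw [Finset.card_filter, Fin.sum_univ_one]

lemma cnt_sum {d n : ℕ} (I : Fin n → Fin d) : ∑ t, cnt I t = n := by
  classical
  unfold cnt
  have := Finset.card_eq_sum_card_fiberwise
    (f := I) (s := Finset.univ) (t := Finset.univ) (fun x _ => Finset.mem_univ _)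
  simp [Finset.card_univ] at this
  omega

lemma degree_of_cnt {d n : ℕ} (α : Fin d →₀ ℕ) (I : Fin n → Fin d)
    (hc : ∀ t, cnt I t = α t) : (α.sum fun _ k => k) = n := by
  have h1 : (α.sum fun _ k => k) = ∑ t : Fin d, α t := Finsupp.sum_fintype _ _ (fun _ => rfl)
  have h2 : ∑ t : Fin d, α t = ∑ t : Fin d, cnt I t :=
    Finset.sum_congr rfl fun t _ => (hc t).symm
  rw [h1, h2, cnt_sum]

lemma coeff_term {d : ℕ} (W : ℕ → Matrix (Fin d) (Fin d) ℝ) (L : List ℕ) (j : Fin d)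
    (α : Fin d →₀ ℕ) :
    coeff α (term W L j)
      = ∑ I ∈ Finset.univ.filter (fun I : Fin (L.length + 1) → Fin d =>
            I 0 = j ∧ ∀ t, cnt I t = α t),
          ∏ k : Fin L.length, W (L.get k) (I k.castSucc) (I k.succ) := by
  induction L generalizing j α with
  | nil =>
      rw [show term W [] j = X j from rfl, coeff_X']
      by_cases h : Finsupp.single j 1 = α
      · rw [if_pos h]
        have hfil : (Finset.univ.filter (fun I : Fin (List.length ([] : List ℕ) + 1) → Fin d =>
            I 0 = j ∧ ∀ t, cnt I t = α t)) = {fun _ => j} := by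
          ext I
          simp only [Finset.mem_filter, Finset.mem_univ, true_and, Finset.mem_singleton]
          constructor
          · rintro ⟨h0, -⟩
            funext k
            have hk : k = 0 := Fin.ext (Nat.lt_one_iff.mp k.isLt)
            rw [hk, h0]
          · rintro rfl
            refine ⟨rfl, fun t => ?_⟩
            rw [cnt_fin_one, ← h, Finsupp.single_apply]
        rw [hfil]
        simp
      · rw [if_neg h]
        have hfil : (Finset.univ.filter (fun I : Fin (List.length ([] : List ℕ) + 1) → Fin d =>
            I 0 = j ∧ ∀ t, cnt I t = α t)) = ∅ := by
          rw [Finset.filter_eq_empty_iff]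
          rintro I - ⟨h0, hc⟩
          apply h
          ext t
          rw [Finsupp.single_apply, ← hc t, cnt_fin_one, h0]
        rw [hfil, Finset.sum_empty]
  | cons a as ih =>
      simp only [List.length_cons]
      by_cases hαj : α j = 0
      · have hL : coeff α (term W (a :: as) j) = 0 := by
          rw [show term W (a :: as) j = X j * ∑ k, C (W a j k) * term W as k from rfl,
            mul_comm, coeff_mul_X']
          rw [if_neg]
          simp [Finsupp.mem_support_iff, hαj]
        rw [hL]
        symm
        have hfil : (Finset.univ.filter (fun I : Fin (as.length + 1 + 1) → Fin d =>
            I 0 = j ∧ ∀ t, cnt I t = α t)) = ∅ := by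
          rw [Finset.filter_eq_empty_iff]
          rintro I - ⟨h0, hc⟩
          have h1 : 0 < cnt I j := by
            apply Finset.card_pos.2
            exact ⟨0, by simp [h0]⟩
          have := hc j
          omega
        rw [hfil, Finset.sum_empty]
      · set β : Fin d →₀ ℕ := α - Finsupp.single j 1 with hβ
        rw [show term W (a :: as) j = X j * ∑ k, C (W a j k) * term W as k from rfl,
          mul_comm, coeff_mul_X', if_pos (Finsupp.mem_support_iff.2 hαj)]
        rw [coeff_sum]
        simp only [coeff_C_mul]
        rw [Finset.sum_congr rfl (fun k _ => by rw [ih k β])]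
        have step1 : ∀ k : Fin d,
            W a j k * ∑ I' ∈ Finset.univ.filter (fun I' : Fin (as.length + 1) → Fin d =>
                I' 0 = k ∧ ∀ t, cnt I' t = β t),
              ∏ kk : Fin as.length, W (as.get kk) (I' kk.castSucc) (I' kk.succ)
            = ∑ I' ∈ Finset.univ.filter (fun I' : Fin (as.length + 1) → Fin d =>
                I' 0 = k ∧ ∀ t, cnt I' t = β t),
              W a j (I' 0) * ∏ kk : Fin as.length, W (as.get kk) (I' kk.castSucc) (I' kk.succ) := by
          intro k
          rw [Finset.mul_sum]
          refine Finset.sum_congr rfl fun I' hI' => ?_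
          rw [(Finset.mem_filter.1 hI').2.1]
        rw [Finset.sum_congr rfl (fun k _ => step1 k)]
        have hA : ∀ k : Fin d,
            (Finset.univ.filter (fun I' : Fin (as.length + 1) → Fin d =>
                I' 0 = k ∧ ∀ t, cnt I' t = β t))
            = (Finset.univ.filter (fun I' : Fin (as.length + 1) → Fin d =>
                ∀ t, cnt I' t = β t)).filter (fun I' => I' 0 = k) := by
          intro k
          rw [Finset.filter_filter]
          apply Finset.filter_congr
          intro I' _
          constructor
          · exact fun ⟨x, y⟩ => ⟨y, x⟩
          · exact fun ⟨x, y⟩ => ⟨y, x⟩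
        rw [Finset.sum_congr rfl (fun k _ => by rw [hA k])]
        rw [Finset.sum_fiberwise _ (fun I' : Fin (as.length + 1) → Fin d => I' 0)
          (fun I' => W a j (I' 0) *
            ∏ kk : Fin as.length, W (as.get kk) (I' kk.castSucc) (I' kk.succ))]
        refine Finset.sum_nbij' (fun I' => Fin.cons j I') (fun I => Fin.tail I) ?_ ?_ ?_ ?_ ?_
        · intro I' hI'
          simp only [Finset.mem_filter, Finset.mem_univ, true_and] at hI' ⊢
          refine ⟨Fin.cons_zero _ _, fun t => ?_⟩
          rw [cnt_cons, hI' t, hβ, Finsupp.tsub_apply, Finsupp.single_apply]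
          rcases eq_or_ne j t with rfl | h
          · rw [if_pos rfl]
            omega
          · rw [if_neg h]
            simp
        · intro I hI
          simp only [Finset.mem_filter, Finset.mem_univ, true_and] at hI ⊢
          intro t
          have hcc := cnt_cons j (Fin.tail I) t
          rw [show Fin.cons j (Fin.tail I) = I by rw [← hI.1]; exact Fin.cons_self_tail I] at hcc
          rw [hβ, Finsupp.tsub_apply, Finsupp.single_apply, ← hI.2 t]
          by_cases h : j = t
          · simp only [h, if_pos rfl] at hcc ⊢
            omega
          · simp only [h, if_neg h] at hcc ⊢
            omega
        · intro I' _
          funext i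
          simp [Fin.tail, Fin.cons_succ]
        · intro I hI
          simp only [Finset.mem_filter, Finset.mem_univ, true_and] at hI
          rw [← hI.1]
          exact Fin.cons_self_tail I
        · intro I' _
          rw [Fin.prod_univ_succ]
          simp only [← Fin.succ_castSucc, Fin.cons_succ, Fin.cons_zero, Fin.castSucc_zero,
            List.get_eq_getElem, List.getElem_cons_succ, List.getElem_cons_zero, Fin.val_succ,
            Fin.val_zero, Fin.coe_castSucc]

/-- descending sort of a finite set -/
noncomputable def sortDesc (S : Finset ℕ) : List ℕ := S.sort (· ≥ ·)

lemma sortDesc_length (S : Finset ℕ) : (sortDesc S).length = S.card := Finset.length_sort _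

lemma sortDesc_mem {S : Finset ℕ} {x : ℕ} : x ∈ sortDesc S ↔ x ∈ S := Finset.mem_sort _

lemma sortDesc_sorted_gt (S : Finset ℕ) : (sortDesc S).Pairwise (· > ·) := by
  have h1 := Finset.pairwise_sort (α := ℕ) S (· ≥ ·)
  have h2 : (sortDesc S).Nodup := Finset.sort_nodup _ _
  exact (List.Pairwise.and h1 h2).imp (fun h => lt_of_le_of_ne h.1 (Ne.symm h.2))

lemma sortDesc_insert {S : Finset ℕ} {a : ℕ} (h1 : ∀ b ∈ S, b ≤ a) (h2 : a ∉ S) :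
    sortDesc (insert a S) = a :: sortDesc S := by
  unfold sortDesc
  exact Finset.sort_insert _ h1 h2

lemma sortDesc_empty : sortDesc ∅ = [] := by unfold sortDesc; exact Finset.sort_empty _

lemma sortDesc_unique {L : List ℕ} {S : Finset ℕ} (hs : L.Pairwise (· > ·))
    (ht : L.toFinset = S) : sortDesc S = L := by
  have hnd : L.Nodup := hs.imp ne_of_gt
  refine (fun (h1 : (sortDesc S).Perm L) (h2 : (sortDesc S).Pairwise (· ≥ ·))
      (h3 : L.Pairwise (· ≥ ·)) => List.Perm.eq_of_pairwise' (r := (· ≥ ·)) h2 h3 h1) ?_ ?_ ?_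
  · exact List.perm_of_nodup_nodup_toFinset_eq (Finset.sort_nodup _ _) hnd
      (by rw [show (sortDesc S).toFinset = S from Finset.sort_toFinset _ _]; exact ht.symm)
  · exact Finset.pairwise_sort _ _
  · exact hs.imp le_of_lt

lemma sum_coeff_term {d : ℕ} (W : ℕ → Matrix (Fin d) (Fin d) ℝ) (L : List ℕ)
    (α : Fin d →₀ ℕ) :
    ∑ j, coeff α (term W L j)
      = ∑ I ∈ Finset.univ.filter (fun I : Fin (L.length + 1) → Fin d => ∀ t, cnt I t = α t),
          ∏ k : Fin L.length, W (L.get k) (I k.castSucc) (I k.succ) := by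
  rw [Finset.sum_congr rfl fun j _ => coeff_term W L j α]
  have hA : ∀ j : Fin d,
      (Finset.univ.filter (fun I : Fin (L.length + 1) → Fin d =>
          I 0 = j ∧ ∀ t, cnt I t = α t))
      = (Finset.univ.filter (fun I : Fin (L.length + 1) → Fin d =>
          ∀ t, cnt I t = α t)).filter (fun I => I 0 = j) := by
    intro j
    rw [Finset.filter_filter]
    apply Finset.filter_congr
    intro I _
    constructor
    · exact fun ⟨x, y⟩ => ⟨y, x⟩
    · exact fun ⟨x, y⟩ => ⟨y, x⟩
  rw [Finset.sum_congr rfl (fun j _ => by rw [hA j])]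
  exact Finset.sum_fiberwise _ (fun I : Fin (L.length + 1) → Fin d => I 0) _

lemma sum_cast {d : ℕ} (W : ℕ → Matrix (Fin d) (Fin d) ℝ) (α : Fin d →₀ ℕ) (n : ℕ)
    (L : List ℕ) (h : L.length = n) :
    (∑ I ∈ Finset.univ.filter (fun I : Fin (L.length + 1) → Fin d => ∀ t, cnt I t = α t),
        ∏ k : Fin L.length, W (L.get k) (I k.castSucc) (I k.succ))
    = ∑ I ∈ Finset.univ.filter (fun I : Fin (n + 1) → Fin d => ∀ t, cnt I t = α t),
        ∏ k : Fin n, W (L.getD (k : ℕ) 1) (I k.castSucc) (I k.succ) := by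
  subst h
  refine Finset.sum_congr rfl fun I _ => Finset.prod_congr rfl fun k _ => ?_
  rw [List.getD_eq_getElem L 1 (by omega)]
  simp [List.get_eq_getElem]

end BitwiseAux

theorem bitwise_cross_coefficients
    (d l : ℕ) (W : ℕ → Matrix (Fin d) (Fin d) ℝ)
    (P : ℕ → Fin d → MvPolynomial (Fin d) ℝ)
    (h0 : ∀ j, P 0 j = X j)
    (hrec : ∀ i, 1 ≤ i → i ≤ l → ∀ j,
      P i j = X j * (∑ k, C (W i j k) * P (i - 1) k) + P (i - 1) j)
    (f : MvPolynomial (Fin d) ℝ) (hf : f = ∑ j, P l j) :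
    (∀ (m : ℕ) (α : Fin d →₀ ℕ), (α.sum fun _ n => n) = m + 2 →
      f.coeff α
        = ∑ J ∈ Finset.univ.filter (fun J : Fin (m + 1) → Fin l => StrictAnti J),
            ∑ I ∈ Finset.univ.filter
                (fun I : Fin (m + 2) → Fin d =>
                  ∀ t, (Finset.univ.filter fun k => I k = t).card = α t),
              ∏ k : Fin (m + 1), W ((J k : ℕ) + 1) (I k.castSucc) (I k.succ)) ∧
    (∀ t : Fin d, f.coeff (Finsupp.single t 1) = 1) ∧
    (∀ α : Fin d →₀ ℕ, l + 1 < (α.sum fun _ n => n) → f.coeff α = 0) := by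
  -- closed form for P i j
  have key : ∀ i, i ≤ l → ∀ j, P i j
      = ∑ S ∈ (Finset.Icc 1 i).powerset, term W (sortDesc S) j := by
    intro i
    induction i with
    | zero =>
        intro _ j
        rw [h0, show Finset.Icc 1 0 = (∅ : Finset ℕ) by simp, Finset.powerset_empty,
          Finset.sum_singleton, sortDesc_empty]
        rfl
    | succ i ih =>
        intro hle j
        have hi : i ≤ l := by omega
        rw [hrec (i + 1) (by omega) hle j]
        simp only [Nat.add_sub_cancel]
        simp only [ih hi]
        have hins : Finset.Icc 1 (i + 1) = insert (i + 1) (Finset.Icc 1 i) := by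
          ext x
          simp only [Finset.mem_Icc, Finset.mem_insert]
          omega
        have hnotmem : ∀ S ∈ (Finset.Icc 1 i).powerset, i + 1 ∉ S := by
          intro S hS hmem
          have := (Finset.mem_Icc.1 ((Finset.mem_powerset.1 hS) hmem)).2
          omega
        have hdisj : Disjoint ((Finset.Icc 1 i).powerset)
            (((Finset.Icc 1 i).powerset).image (insert (i + 1))) := by
          rw [Finset.disjoint_left]
          intro S hS hS2
          obtain ⟨S', hS', rfl⟩ := Finset.mem_image.1 hS2
          exact hnotmem _ hS (Finset.mem_insert_self _ _)
        have hinj : ∀ S ∈ (Finset.Icc 1 i).powerset, ∀ S' ∈ (Finset.Icc 1 i).powerset,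
            insert (i + 1) S = insert (i + 1) S' → S = S' := by
          intro S hS S' hS' h
          have h1 := hnotmem _ hS
          have h2 := hnotmem _ hS'
          rw [← Finset.erase_insert h1, h, Finset.erase_insert h2]
        rw [hins, Finset.powerset_insert, Finset.sum_union hdisj, Finset.sum_image hinj]
        have hterm : ∀ S ∈ (Finset.Icc 1 i).powerset,
            term W (sortDesc (insert (i + 1) S)) j
              = X j * ∑ k, C (W (i + 1) j k) * term W (sortDesc S) k := by
          intro S hS
          have hsub := Finset.mem_powerset.1 hS
          have hb : ∀ b ∈ S, b ≤ i + 1 := fun b hb => by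
            have := (Finset.mem_Icc.1 (hsub hb)).2; omega
          rw [sortDesc_insert hb (hnotmem _ hS)]
          rfl
        rw [Finset.sum_congr rfl hterm]
        have hswap : (∑ k, C (W (i + 1) j k) * ∑ S ∈ (Finset.Icc 1 i).powerset,
              term W (sortDesc S) k)
            = ∑ S ∈ (Finset.Icc 1 i).powerset, ∑ k, C (W (i + 1) j k)
                * term W (sortDesc S) k := by
          rw [Finset.sum_congr rfl fun k _ => Finset.mul_sum _ _ _]
          exact Finset.sum_comm
        rw [hswap, ← Finset.mul_sum, add_comm]
  -- coefficient of f as a sum over subsets of layers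
  have hcoeff : ∀ α : Fin d →₀ ℕ, coeff α f
      = ∑ S ∈ (Finset.Icc 1 l).powerset,
          ∑ I ∈ Finset.univ.filter
              (fun I : Fin ((sortDesc S).length + 1) → Fin d => ∀ t, cnt I t = α t),
            ∏ k : Fin (sortDesc S).length,
              W ((sortDesc S).get k) (I k.castSucc) (I k.succ) := by
    intro α
    rw [hf, coeff_sum]
    rw [Finset.sum_congr rfl fun j _ => by rw [key l le_rfl j, coeff_sum]]
    rw [Finset.sum_comm]
    exact Finset.sum_congr rfl fun S _ => sum_coeff_term W _ α
  have hzero : ∀ (α : Fin d →₀ ℕ) (S : Finset ℕ),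
      (α.sum fun _ k => k) ≠ (sortDesc S).length + 1 →
      (∑ I ∈ Finset.univ.filter
          (fun I : Fin ((sortDesc S).length + 1) → Fin d => ∀ t, cnt I t = α t),
        ∏ k : Fin (sortDesc S).length,
          W ((sortDesc S).get k) (I k.castSucc) (I k.succ)) = 0 := by
    intro α S hne
    have hfil : (Finset.univ.filter
        (fun I : Fin ((sortDesc S).length + 1) → Fin d => ∀ t, cnt I t = α t)) = ∅ := by
      rw [Finset.filter_eq_empty_iff]
      intro I _ hc
      exact hne (degree_of_cnt α I hc)
    rw [hfil, Finset.sum_empty]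
  refine ⟨?_, ?_, ?_⟩
  · -- part 1
    intro m α hα
    -- restrict to subsets of cardinality m + 1
    rw [hcoeff α, ← Finset.sum_filter_of_ne (p := fun S : Finset ℕ => S.card = m + 1) ?hne]
    case hne =>
      intro S hS hnz
      by_contra hcard
      apply hnz
      apply hzero
      rw [sortDesc_length, hα]
      omega
    rw [Finset.sum_congr rfl fun S hS => sum_cast W α (m + 1) (sortDesc S)
      (by rw [sortDesc_length]; exact (Finset.mem_filter.1 hS).2)]
    rcases Nat.eq_zero_or_pos l with rfl | hl
    · -- l = 0 : both sides vanish
      rw [show (Finset.Icc 1 0).powerset.filter (fun S => S.card = m + 1) = ∅ by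
        rw [Finset.filter_eq_empty_iff]
        intro S hS
        have : S = ∅ := by simpa [Finset.powerset_empty] using hS
        simp [this]]
      rw [Finset.sum_empty]
      symm
      exact Finset.sum_eq_zero fun J _ => (J 0).elim0
    -- the bijection between subsets of cardinality m+1 and strictly decreasing tuples
    refine Finset.sum_nbij'
      (fun S => fun k : Fin (m + 1) =>
        (⟨min ((sortDesc S).getD (k : ℕ) 1 - 1) (l - 1), by omega⟩ : Fin l))
      (fun J => Finset.image (fun k : Fin (m + 1) => (J k : ℕ) + 1) Finset.univ)
      ?_ ?_ ?_ ?_ ?_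
    · -- maps to strictly antitone tuples
      intro S hS
      obtain ⟨hS1, hS2⟩ := Finset.mem_filter.1 hS
      have hsub := Finset.mem_powerset.1 hS1
      have hlen : (sortDesc S).length = m + 1 := by rw [sortDesc_length]; exact hS2
      have hmem : ∀ k : Fin (m + 1), (sortDesc S).getD (k : ℕ) 1 ∈ Finset.Icc 1 l := by
        intro k
        rw [List.getD_eq_getElem _ 1 (by omega)]
        exact hsub (sortDesc_mem.1 (List.getElem_mem _))
      simp only [Finset.mem_filter, Finset.mem_univ, true_and]
      intro k k' hkk'
      have h1 := Finset.mem_Icc.1 (hmem k)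
      have h2 := Finset.mem_Icc.1 (hmem k')
      have hgt : (sortDesc S).getD (k' : ℕ) 1 < (sortDesc S).getD (k : ℕ) 1 := by
        rw [List.getD_eq_getElem _ 1 (by omega), List.getD_eq_getElem _ 1 (by omega)]
        simpa [List.get_eq_getElem] using List.Pairwise.rel_get_of_lt (sortDesc_sorted_gt S)
          (a := ⟨(k : ℕ), by omega⟩) (b := ⟨(k' : ℕ), by omega⟩) (Fin.mk_lt_mk.2 hkk')
      simp only [Fin.mk_lt_mk]
      omega
    · -- image of a strictly antitone tuple is a subset of cardinality m+1
      intro J hJ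
      have hJa : StrictAnti J := (Finset.mem_filter.1 hJ).2
      refine Finset.mem_filter.2 ⟨Finset.mem_powerset.2 ?_, ?_⟩
      · intro x hx
        obtain ⟨k, -, rfl⟩ := Finset.mem_image.1 hx
        have := (J k).isLt
        rw [Finset.mem_Icc]
        omega
      · rw [Finset.card_image_of_injective _ ?hji, Finset.card_univ, Fintype.card_fin]
        case hji =>
          intro x y hxy
          have hxy' : (J x : ℕ) + 1 = (J y : ℕ) + 1 := hxy
          exact hJa.injective (Fin.ext (by omega))
    · -- left inverse
      intro S hS
      obtain ⟨hS1, hS2⟩ := Finset.mem_filter.1 hS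
      have hsub := Finset.mem_powerset.1 hS1
      have hlen : (sortDesc S).length = m + 1 := by rw [sortDesc_length]; exact hS2
      have hmem : ∀ k : Fin (m + 1), (sortDesc S).getD (k : ℕ) 1 ∈ Finset.Icc 1 l := by
        intro k
        rw [List.getD_eq_getElem _ 1 (by omega)]
        exact hsub (sortDesc_mem.1 (List.getElem_mem _))
      ext x
      simp only [Finset.mem_image, Finset.mem_univ, true_and]
      constructor
      · rintro ⟨k, rfl⟩
        have h1 := Finset.mem_Icc.1 (hmem k)
        have hx : (sortDesc S).getD (k : ℕ) 1 ∈ S := by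
          rw [List.getD_eq_getElem _ 1 (by omega)]
          exact sortDesc_mem.1 (List.getElem_mem _)
        show min ((sortDesc S).getD (k : ℕ) 1 - 1) (l - 1) + 1 ∈ S
        rw [show min ((sortDesc S).getD (k : ℕ) 1 - 1) (l - 1) + 1
            = (sortDesc S).getD (k : ℕ) 1 from by omega]
        exact hx
      · intro hx
        have hx' : x ∈ sortDesc S := sortDesc_mem.2 hx
        obtain ⟨n, hn⟩ := List.mem_iff_get.1 hx'
        refine ⟨⟨(n : ℕ), by omega⟩, ?_⟩
        have hxI : x ∈ Finset.Icc 1 l := hsub hx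
        have h1 := Finset.mem_Icc.1 hxI
        have hgd : (sortDesc S).getD ((n : ℕ)) 1 = x := by
          rw [List.getD_eq_getElem _ 1 (by omega)]
          rw [← hn]
          simp [List.get_eq_getElem]
        show min ((sortDesc S).getD ((n : ℕ)) 1 - 1) (l - 1) + 1 = x
        rw [hgd]
        omega
    · -- right inverse
      intro J hJ
      have hJa : StrictAnti J := (Finset.mem_filter.1 hJ).2
      have hsort : sortDesc (Finset.image (fun k : Fin (m + 1) => (J k : ℕ) + 1) Finset.univ)
          = List.ofFn (fun k : Fin (m + 1) => (J k : ℕ) + 1) := by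
        apply sortDesc_unique
        · rw [List.pairwise_ofFn]
          intro a b hab
          have := hJa hab
          omega
        · ext x
          simp only [List.mem_toFinset, List.mem_ofFn, Finset.mem_image, Finset.mem_univ,
            true_and]
      funext k
      apply Fin.ext
      show min ((sortDesc (Finset.image (fun k : Fin (m + 1) => (J k : ℕ) + 1)
          Finset.univ)).getD (k : ℕ) 1 - 1) (l - 1) = (J k : ℕ)
      rw [hsort]
      have hgd : (List.ofFn (fun k : Fin (m + 1) => (J k : ℕ) + 1)).getD (k : ℕ) 1
          = (J k : ℕ) + 1 := by
        rw [List.getD_eq_getElem _ 1 (by simp only [List.length_ofFn]; omega), List.getElem_ofFn]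
      rw [hgd]
      have := (J k).isLt
      omega
    · -- values agree
      intro S hS
      obtain ⟨hS1, hS2⟩ := Finset.mem_filter.1 hS
      have hsub := Finset.mem_powerset.1 hS1
      have hlen : (sortDesc S).length = m + 1 := by rw [sortDesc_length]; exact hS2
      have hmem : ∀ k : Fin (m + 1), (sortDesc S).getD (k : ℕ) 1 ∈ Finset.Icc 1 l := by
        intro k
        rw [List.getD_eq_getElem _ 1 (by omega)]
        exact hsub (sortDesc_mem.1 (List.getElem_mem _))
      refine Finset.sum_congr rfl fun I _ => Finset.prod_congr rfl fun k _ => ?_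
      have h1 := Finset.mem_Icc.1 (hmem k)
      show W ((sortDesc S).getD (k : ℕ) 1) (I k.castSucc) (I k.succ)
          = W (min ((sortDesc S).getD (k : ℕ) 1 - 1) (l - 1) + 1) (I k.castSucc) (I k.succ)
      rw [show min ((sortDesc S).getD (k : ℕ) 1 - 1) (l - 1) + 1
          = (sortDesc S).getD (k : ℕ) 1 from by omega]
  · -- part 2 : degree-one coefficients
    intro t
    rw [hcoeff]
    rw [Finset.sum_eq_single_of_mem ∅ (Finset.mem_powerset.2 (Finset.empty_subset _)) ?hrest]
    case hrest =>
      intro S hS hSne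
      apply hzero
      rw [Finsupp.sum_single_index (by rfl), sortDesc_length]
      have : 0 < S.card := Finset.card_pos.2 (Finset.nonempty_iff_ne_empty.2 hSne)
      omega
    rw [show (sortDesc (∅ : Finset ℕ)) = [] from sortDesc_empty]
    have hfil : (Finset.univ.filter
        (fun I : Fin (List.length ([] : List ℕ) + 1) → Fin d =>
          ∀ s, cnt I s = Finsupp.single t 1 s)) = {fun _ => t} := by
      ext I
      simp only [Finset.mem_filter, Finset.mem_univ, true_and, Finset.mem_singleton]
      constructor
      · intro hc
        funext k
        have hk : k = 0 := Fin.ext (Nat.lt_one_iff.mp k.isLt)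
        have h1 := hc t
        rw [cnt_fin_one, Finsupp.single_apply, if_pos rfl] at h1
        rw [hk]
        by_contra hne
        rw [if_neg hne] at h1
        omega
      · rintro rfl s
        rw [cnt_fin_one, Finsupp.single_apply]
    rw [hfil, Finset.sum_singleton]
    simp
  · -- part 3 : coefficients of degree > l + 1 vanish
    intro α hα
    rw [hcoeff]
    apply Finset.sum_eq_zero
    intro S hS
    apply hzero
    have hsub := Finset.mem_powerset.1 hS
    have hcard : S.card ≤ l := by
      have := Finset.card_le_card hsub
      rwa [Nat.card_Icc, Nat.add_sub_cancel] at this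
    rw [sortDesc_length]
    omega
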